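/- Let X ⊆ ℤ² be finite, nonempty, c_i-connected, and row-convex, where i ∈ {1,2}. Then (X,c_i) is i-contractible. -/

import Mathlib

/-- Points of the digital plane. -/
abbrev Pt : Type := ℤ × ℤ

/-- `c_i`-adjacency on `ℤ²` (for `i = 1` or `i = 2`). -/
def cAdj (i : ℕ) (x y : Pt) : Prop :=
  if i = 1 then |x.1 - y.1| + |x.2 - y.2| ≤ 1
  else |x.1 - y.1| ≤ 1 ∧ |x.2 - y.2| ≤ 1

/-- The adjacency induced on a subset of `ℤ²`. -/
def subAdj (i : ℕ) (X : Set Pt) (x y : X) : Prop := cAdj i x.1 y.1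

/-- Digital continuity of a map between digital images. -/
def DigCont {α β : Type} (κ : α → α → Prop) (δ : β → β → Prop) (f : α → β) : Prop :=
  ∀ x y, κ x y → δ (f x) (f y)

/-- The standard (`c_1`) adjacency on `ℕ`, used for digital intervals. -/
def natAdj (s t : ℕ) : Prop := s = t ∨ s + 1 = t ∨ t + 1 = s

/-- The two normal product adjacencies on `α × ℕ`. -/
def prodAdj (i : ℕ) {α : Type} (κ : α → α → Prop) (p q : α × ℕ) : Prop :=
  if i = 1 then (κ p.1 q.1 ∧ p.2 = q.2) ∨ (p.1 = q.1 ∧ natAdj p.2 q.2)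
  else κ p.1 q.1 ∧ natAdj p.2 q.2

/-- `f` and `g` are `i`-homotopic: there is a continuous
`H : X ×_i [0,m]_ℤ → Y` with `H(·,0) = f` and `H(·,m) = g`. -/
def Homotopic (i : ℕ) {α β : Type} (κ : α → α → Prop) (δ : β → β → Prop)
    (f g : α → β) : Prop :=
  ∃ (m : ℕ) (H : α → ℕ → β),
    (∀ x, H x 0 = f x) ∧ (∀ x, H x m = g x) ∧
    (∀ x y s t, s ≤ m → t ≤ m → prodAdj i κ (x, s) (y, t) → δ (H x s) (H y t))

/-- `i`-homotopy equivalence of digital images. -/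
def HtpyEquiv (i : ℕ) {α β : Type} (κ : α → α → Prop) (δ : β → β → Prop) : Prop :=
  ∃ (f : α → β) (g : β → α),
    DigCont κ δ f ∧ DigCont δ κ g ∧
    Homotopic i κ κ (g ∘ f) id ∧ Homotopic i δ δ (f ∘ g) id

/-- Homotopy equivalence of digital pictures `(X, c_i, c_j)` and `(Y, c_i, c_j)`. -/
def PicHtpyEquiv (i j : ℕ) (X Y : Set Pt) : Prop :=
  HtpyEquiv i (subAdj i X) (subAdj i Y) ∧ HtpyEquiv j (subAdj j Xᶜ) (subAdj j Yᶜ)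

/-- Isomorphism of digital images: a continuous bijection with continuous inverse. -/
def DigIso {α β : Type} (κ : α → α → Prop) (δ : β → β → Prop) : Prop :=
  ∃ e : α ≃ β, DigCont κ δ ⇑e ∧ DigCont δ κ ⇑e.symm

/-- Isomorphism of digital pictures. -/
def PicIso (i j : ℕ) (X Y : Set Pt) : Prop :=
  DigIso (subAdj i X) (subAdj i Y) ∧ DigIso (subAdj j Xᶜ) (subAdj j Yᶜ)

/-- `x` and `y` are joined by a `c_i`-path inside `A`. -/
def ChainIn (i : ℕ) (A : Set Pt) (x y : Pt) : Prop :=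
  ∃ (n : ℕ) (c : ℕ → Pt), c 0 = x ∧ c n = y ∧ (∀ k ≤ n, c k ∈ A) ∧
    ∀ k < n, cAdj i (c k) (c (k + 1))

/-- `A` is `c_i`-connected. -/
def Conn (i : ℕ) (A : Set Pt) : Prop := ∀ x ∈ A, ∀ y ∈ A, ChainIn i A x y

/-- The `c_i`-component of `p` in `A`. -/
def compOf (i : ℕ) (A : Set Pt) (p : Pt) : Set Pt := {y | ChainIn i A p y}

/-- The digital picture `(X, c_i, c_j)` has no hole: every `c_j`-component
of the complement of `X` is infinite. -/
def NoHole (j : ℕ) (X : Set Pt) : Prop := ∀ p ∈ Xᶜ, (compOf j Xᶜ p).Infinite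

/-- The row of `X` at height `k`. -/
def rowOf (X : Set Pt) (k : ℤ) : Set Pt := X ∩ {p | p.2 = k}

/-- `r` is a row component of `(X, c_i)`: a `c_i`-component of a row of `X`. -/
def IsRowComp (i : ℕ) (X : Set Pt) (r : Set Pt) : Prop :=
  ∃ (k : ℤ) (p : Pt), p ∈ rowOf X k ∧ r = compOf i (rowOf X k) p

/-- Two subsets of `ℤ²` are `c_i`-adjacent. -/
def setAdj (i : ℕ) (A B : Set Pt) : Prop := ∃ a ∈ A, ∃ b ∈ B, cAdj i a b

/-- The edge relation of the row component graph `R(X, c_i)`: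
two distinct row components joined when they are `c_i`-adjacent. -/
def rcgAdj (i : ℕ) (X : Set Pt) (r s : Set Pt) : Prop :=
  IsRowComp i X r ∧ IsRowComp i X s ∧ r ≠ s ∧ setAdj i r s

/-- The row component graph `R(X, c_i)` is acyclic: there is no cycle of
`k ≥ 3` distinct row components with consecutive ones adjacent. -/
def RCGAcyclic (i : ℕ) (X : Set Pt) : Prop :=
  ¬ ∃ (k : ℕ) (r : ℕ → Set Pt), 3 ≤ k ∧
    (∀ t < k, IsRowComp i X (r t)) ∧
    (∀ t < k, ∀ t' < k, r t = r t' → t = t') ∧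
    (∀ t, t + 1 < k → rcgAdj i X (r t) (r (t + 1))) ∧
    rcgAdj i X (r (k - 1)) (r 0)

/-- The row component graph `R(X, c_i)` is connected. -/
def RCGConnected (i : ℕ) (X : Set Pt) : Prop :=
  ∀ r s : Set Pt, IsRowComp i X r → IsRowComp i X s →
    Relation.ReflTransGen (rcgAdj i X) r s

/-- A digital image is `i`-contractible: the identity is `i`-homotopic to a constant map. -/
def Contractible (i : ℕ) {α : Type} (κ : α → α → Prop) : Prop :=
  ∃ x₀ : α, Homotopic i κ κ id (fun _ => x₀)

/-- Row-convexity. -/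
def RowConvex (X : Set Pt) : Prop :=
  ∀ a b c k : ℤ, (a, k) ∈ X → (c, k) ∈ X → a ≤ b → b ≤ c → (b, k) ∈ X

/-- Column-convexity. -/
def ColConvex (X : Set Pt) : Prop :=
  ∀ a b c k : ℤ, (k, a) ∈ X → (k, c) ∈ X → a ≤ b → b ≤ c → (k, b) ∈ X

/-- The row-convex hull of `X`. -/
def Hr (X : Set Pt) : Set Pt := ⋂₀ {S | RowConvex S ∧ X ⊆ S}

/-- The column-convex hull of `X`. -/
def Hc (X : Set Pt) : Set Pt := ⋂₀ {S | ColConvex S ∧ X ⊆ S}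

/-- The rc-convex hull of `X`. -/
def Hrc (X : Set Pt) : Set Pt := ⋂₀ {S | (RowConvex S ∧ ColConvex S) ∧ X ⊆ S}

/-- A loop of length `m` inside `Z`: a continuous `γ : [0,m]_ℤ → Z` with `γ 0 = γ m`. -/
def LoopIn (j : ℕ) (Z : Set Pt) (m : ℕ) (γ : ℕ → Pt) : Prop :=
  γ 0 = γ m ∧ (∀ t ≤ m, γ t ∈ Z) ∧ ∀ t < m, cAdj j (γ t) (γ (t + 1))

/-- The loop `γ` is `j`-contractible in `Z`: there is a `j`-homotopy in `Z` from `γ`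
to the constant loop at `γ 0` whose every stage is a loop based at `γ 0`. -/
def LoopContractibleIn (j : ℕ) (Z : Set Pt) (m : ℕ) (γ : ℕ → Pt) : Prop :=
  ∃ (K : ℕ) (H : ℕ → ℕ → Pt),
    (∀ t, H t 0 = γ t) ∧ (∀ t, H t K = γ 0) ∧
    (∀ k ≤ K, H 0 k = γ 0 ∧ H m k = γ 0) ∧
    (∀ t ≤ m, ∀ k ≤ K, H t k ∈ Z) ∧
    (∀ s t k l, s ≤ m → t ≤ m → k ≤ K → l ≤ K →
      prodAdj j natAdj (s, k) (t, l) → cAdj j (H s k) (H t l))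

/-- The union of the infinite `c_j`-components of the complement of `X`. -/
def InfPart (j : ℕ) (X : Set Pt) : Set Pt := {p | p ∈ Xᶜ ∧ (compOf j Xᶜ p).Infinite}

/-- The outer perimeter of the digital picture `(X, c_i, c_j)`: the least length of a
non-`j`-contractible loop in the infinite component of the complement of `X`, or `1`
if no such loop exists.  (It depends only on `j` and `X`.) -/
noncomputable def outerPerim (j : ℕ) (X : Set Pt) : ℕ := by
  classical
  exact if (∃ m γ, LoopIn j (InfPart j X) m γ ∧ ¬ LoopContractibleIn j (InfPart j X) m γ)
    then sInf {m | ∃ γ, LoopIn j (InfPart j X) m γ ∧ ¬ LoopContractibleIn j (InfPart j X) m γ}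
    else 1

/-- The digital rectangle `I_{n,m} = [1,n]_ℤ × [1,m]_ℤ`. -/
def Irect (n m : ℤ) : Set Pt := Set.Icc 1 n ×ˢ Set.Icc 1 m

/-- A finite digital image is `i`-reducible when it is `i`-homotopy equivalent to a
digital image with strictly fewer points. -/
def Reducible (i : ℕ) {α : Type} (κ : α → α → Prop) : Prop :=
  ∃ (β : Type) (δ : β → β → Prop), Reflexive δ ∧ Symmetric δ ∧ Finite β ∧
    Nat.card β < Nat.card α ∧ HtpyEquiv i κ δ

set_option linter.unusedSectionVars false
set_option linter.unnecessarySeqFocus false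

-- helpers
lemma cAdj_one_iff (p q : Pt) : cAdj 1 p q ↔ (p.1 - q.1).natAbs + (p.2 - q.2).natAbs ≤ 1 := by
  unfold cAdj
  rw [if_pos rfl, Int.abs_eq_natAbs, Int.abs_eq_natAbs]
  omega

lemma cAdj_two_iff (p q : Pt) : cAdj 2 p q ↔ (p.1 - q.1).natAbs ≤ 1 ∧ (p.2 - q.2).natAbs ≤ 1 := by
  unfold cAdj
  rw [if_neg (by norm_num), Int.abs_eq_natAbs, Int.abs_eq_natAbs]
  omega

lemma cAdj_refl (i : ℕ) (p : Pt) : cAdj i p p := by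
  unfold cAdj; split <;> simp

lemma cAdj_symm {i : ℕ} {p q : Pt} (h : cAdj i p q) : cAdj i q p := by
  unfold cAdj at *
  split at h <;> rename_i hi
  · rw [if_pos hi, abs_sub_comm, abs_sub_comm q.2]; exact h
  · rw [if_neg hi, abs_sub_comm, abs_sub_comm q.2]; exact h

lemma sign_cases (d : ℤ) : (0 < d ∧ d.sign = 1) ∨ (d = 0 ∧ d.sign = 0) ∨ (d < 0 ∧ d.sign = -1) := by
  rcases lt_trichotomy 0 d with h | h | h
  · exact Or.inl ⟨h, Int.sign_eq_one_of_pos h⟩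
  · exact Or.inr (Or.inl ⟨h.symm, by simp [← h]⟩)
  · exact Or.inr (Or.inr ⟨h, Int.sign_eq_neg_one_of_neg h⟩)

lemma fin_max_ex (S : Set ℤ) (h : S.Finite) (hn : S.Nonempty) : ∃ b ∈ S, ∀ x ∈ S, x ≤ b := by
  obtain ⟨b, hb, hm⟩ := h.exists_maximalFor id S hn
  exact ⟨b, hb, fun x hx => le_of_not_gt fun hlt => absurd (hm hx hlt.le) (not_le.mpr hlt)⟩

lemma fin_min_ex (S : Set ℤ) (h : S.Finite) (hn : S.Nonempty) : ∃ b ∈ S, ∀ x ∈ S, b ≤ x := by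
  obtain ⟨b, hb, hm⟩ := h.exists_minimalFor id S hn
  exact ⟨b, hb, fun x hx => le_of_not_gt fun hlt => absurd (hm hx hlt.le) (not_le.mpr hlt)⟩

/-- Auxiliary, `Pt`-level version of contractibility. -/
def AuxContr (i : ℕ) (X : Set Pt) : Prop :=
  ∃ x₀ ∈ X, ∃ (m : ℕ) (H : Pt → ℕ → Pt),
    (∀ p ∈ X, H p 0 = p) ∧ (∀ p ∈ X, H p m = x₀) ∧
    (∀ p ∈ X, ∀ t ≤ m, H p t ∈ X) ∧
    (∀ p ∈ X, ∀ q ∈ X, ∀ s t : ℕ, s ≤ m → t ≤ m →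
      prodAdj i (cAdj i) (p, s) (q, t) → cAdj i (H p s) (H q t))

section Flow

variable (X : Set Pt) (k0 x0 : ℤ) (u : ℤ → ℤ)

open Classical in
/-- One step of the contracting flow for `c₁`. -/
noncomputable def flowF (p : Pt) : Pt :=
  if p.2 ≤ k0 then (p.1 + (x0 - p.1).sign, p.2)
  else if (p.1, p.2 - 1) ∈ X then (p.1, p.2 - 1)
  else (p.1 + (u p.2 - p.1).sign, p.2)

variable {X k0 x0 u}
variable (hk0 : ∀ p ∈ X, k0 ≤ p.2) (hx0 : (x0, k0) ∈ X)
  (hu : ∀ k : ℤ, k0 < k → (∃ x, (x, k) ∈ X) → (u k, k) ∈ X ∧ (u k, k - 1) ∈ X)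
  (hrc : RowConvex X)

include hk0 hx0 hu hrc in
lemma flow_mem : ∀ p ∈ X, flowF X k0 x0 u p ∈ X := by
  rintro ⟨x, k⟩ hp
  unfold flowF
  dsimp only
  split_ifs with h1 h2
  · have hk : k = k0 := le_antisymm h1 (hk0 _ hp)
    subst hk
    rcases sign_cases (x0 - x) with ⟨hd, hs⟩ | ⟨hd, hs⟩ | ⟨hd, hs⟩ <;> rw [hs]
    · exact hrc x (x + 1) x0 k hp hx0 (by omega) (by omega)
    · simpa using hp
    · have e : x + (-1 : ℤ) = x - 1 := by ring
      rw [e]; exact hrc x0 (x - 1) x k hx0 hp (by omega) (by omega)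
  · exact h2
  · have hup := hu k (by omega) ⟨x, hp⟩
    rcases sign_cases (u k - x) with ⟨hd, hs⟩ | ⟨hd, hs⟩ | ⟨hd, hs⟩ <;> rw [hs]
    · exact hrc x (x + 1) (u k) k hp hup.1 (by omega) (by omega)
    · simpa using hp
    · have e : x + (-1 : ℤ) = x - 1 := by ring
      rw [e]; exact hrc (u k) (x - 1) x k hup.1 hp (by omega) (by omega)

lemma flow_adj_self : ∀ p : Pt, cAdj 1 p (flowF X k0 x0 u p) := by
  rintro ⟨x, k⟩
  unfold flowF
  dsimp only
  split_ifs with h1 h2 <;> rw [cAdj_one_iff] <;> dsimp only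
  · rcases sign_cases (x0 - x) with ⟨hd, hs⟩ | ⟨hd, hs⟩ | ⟨hd, hs⟩ <;> rw [hs] <;> omega
  · omega
  · rcases sign_cases (u k - x) with ⟨hd, hs⟩ | ⟨hd, hs⟩ | ⟨hd, hs⟩ <;> rw [hs] <;> omega

include hk0 hx0 hu hrc in
lemma flow_cont : ∀ p ∈ X, ∀ q ∈ X, cAdj 1 p q →
    cAdj 1 (flowF X k0 x0 u p) (flowF X k0 x0 u q) := by
  have main : ∀ x k : ℤ, (x, k) ∈ X → ((x + 1, k) ∈ X →
      cAdj 1 (flowF X k0 x0 u (x, k)) (flowF X k0 x0 u (x + 1, k))) ∧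
      ((x, k + 1) ∈ X → cAdj 1 (flowF X k0 x0 u (x, k)) (flowF X k0 x0 u (x, k + 1))) := by
    intro x k hp
    constructor
    · intro hq
      by_cases hb : k ≤ k0
      · unfold flowF
        dsimp only
        rw [if_pos hb, if_pos hb, cAdj_one_iff]
        dsimp only
        rcases sign_cases (x0 - x) with ⟨h1, e1⟩ | ⟨h1, e1⟩ | ⟨h1, e1⟩ <;>
          rcases sign_cases (x0 - (x + 1)) with ⟨h2, e2⟩ | ⟨h2, e2⟩ | ⟨h2, e2⟩ <;>
          rw [e1, e2] <;> omega
      · have hup := hu k (by omega) ⟨x, hp⟩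
        by_cases hd1 : (x, k - 1) ∈ X <;> by_cases hd2 : (x + 1, k - 1) ∈ X
        · unfold flowF
          dsimp only
          rw [if_neg hb, if_neg hb, if_pos hd1, if_pos hd2, cAdj_one_iff]
          dsimp only; omega
        · have hule : u k ≤ x := by
            by_contra hcon
            push_neg at hcon
            exact hd2 (hrc x (x + 1) (u k) (k - 1) hd1 hup.2 (by omega) (by omega))
          have hs : (u k - (x + 1)).sign = -1 := Int.sign_eq_neg_one_of_neg (by omega)
          unfold flowF
          dsimp only
          rw [if_neg hb, if_neg hb, if_pos hd1, if_neg hd2, hs, cAdj_one_iff]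
          dsimp only; omega
        · have hule : x + 1 ≤ u k := by
            by_contra hcon
            push_neg at hcon
            exact hd1 (hrc (u k) x (x + 1) (k - 1) hup.2 hd2 (by omega) (by omega))
          have hs : (u k - x).sign = 1 := Int.sign_eq_one_of_pos (by omega)
          unfold flowF
          dsimp only
          rw [if_neg hb, if_neg hb, if_neg hd1, if_pos hd2, hs, cAdj_one_iff]
          dsimp only; omega
        · unfold flowF
          dsimp only
          rw [if_neg hb, if_neg hb, if_neg hd1, if_neg hd2, cAdj_one_iff]
          dsimp only
          rcases sign_cases (u k - x) with ⟨h1, e1⟩ | ⟨h1, e1⟩ | ⟨h1, e1⟩ <;>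
            rcases sign_cases (u k - (x + 1)) with ⟨h2, e2⟩ | ⟨h2, e2⟩ | ⟨h2, e2⟩ <;>
            rw [e1, e2] <;> omega
    · intro hq
      have hb : ¬ (k + 1 ≤ k0) := by have := hk0 _ hp; omega
      have hdrop : flowF X k0 x0 u (x, k + 1) = (x, k) := by
        unfold flowF
        dsimp only
        rw [if_neg hb, if_pos (by simpa using hp)]
        norm_num
      rw [hdrop]
      exact cAdj_symm (flow_adj_self (x, k))
  rintro ⟨x, k⟩ hp ⟨y, l⟩ hq hadj
  rw [cAdj_one_iff] at hadj
  dsimp only at hadj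
  have h5 : (y = x ∧ l = k) ∨ (y = x + 1 ∧ l = k) ∨ (x = y + 1 ∧ k = l) ∨
      (y = x ∧ l = k + 1) ∨ (x = y ∧ k = l + 1) := by omega
  rcases h5 with ⟨e1, e2⟩ | ⟨e1, e2⟩ | ⟨e1, e2⟩ | ⟨e1, e2⟩ | ⟨e1, e2⟩
  · have e : ((y, l) : Pt) = (x, k) := by rw [e1, e2]
    rw [e]; exact cAdj_refl 1 _
  · have e : ((y, l) : Pt) = (x + 1, k) := by rw [e1, e2]
    rw [e]; exact (main x k hp).1 (e ▸ hq)
  · have e : ((x, k) : Pt) = (y + 1, l) := by rw [e1, e2]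
    rw [e]; exact cAdj_symm ((main y l hq).1 (e ▸ hp))
  · have e : ((y, l) : Pt) = (x, k + 1) := by rw [e1, e2]
    rw [e]; exact (main x k hp).2 (e ▸ hq)
  · have e : ((x, k) : Pt) = (y, l + 1) := by rw [e1, e2]
    rw [e]; exact cAdj_symm ((main y l hq).2 (e ▸ hp))

end Flow

section Term

variable (X : Set Pt) (k0 x0 : ℤ) (u : ℤ → ℤ) (W : ℕ)

/-- Termination potential for the flow. -/
noncomputable def flowPhi (p : Pt) : ℕ :=
  (W + 1) * (p.2 - k0).toNat + (p.1 - (if p.2 ≤ k0 then x0 else u p.2)).natAbs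

variable {X k0 x0 u W}
variable (hk0 : ∀ p ∈ X, k0 ≤ p.2) (hx0 : (x0, k0) ∈ X)
  (hu : ∀ k : ℤ, k0 < k → (∃ x, (x, k) ∈ X) → (u k, k) ∈ X ∧ (u k, k - 1) ∈ X)
  (hrc : RowConvex X)
  (hW : ∀ p ∈ X, ∀ q ∈ X, (p.1 - q.1).natAbs ≤ W)

include hk0 hx0 hu hW in
lemma flow_dec : ∀ p ∈ X, p ≠ (x0, k0) →
    flowPhi k0 x0 u W (flowF X k0 x0 u p) < flowPhi k0 x0 u W p := by
  rintro ⟨x, k⟩ hp hne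
  have hk := hk0 _ hp
  unfold flowF
  dsimp only
  split_ifs with h1 h2
  · -- bottom row
    have hkk : k = k0 := le_antisymm h1 hk
    subst hkk
    have hxne : x ≠ x0 := by
      intro h; exact hne (by rw [h])
    unfold flowPhi
    dsimp only
    simp only [if_pos h1]
    rcases sign_cases (x0 - x) with ⟨hd, hs⟩ | ⟨hd, hs⟩ | ⟨hd, hs⟩ <;> rw [hs] <;> omega
  · -- drop
    have hklt : k0 < k := by omega
    unfold flowPhi
    dsimp only
    rw [if_neg h1]
    have hbound : (x - (if k - 1 ≤ k0 then x0 else u (k - 1))).natAbs ≤ W := by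
      split_ifs with h3
      · exact hW (x, k - 1) h2 (x0, k0) hx0
      · exact hW (x, k - 1) h2 (u (k - 1), k - 1) (hu (k - 1) (by omega) ⟨x, h2⟩).1
    have e : (k - k0).toNat = (k - 1 - k0).toNat + 1 := by omega
    rw [e, Nat.mul_succ]
    omega
  · -- horizontal at height k > k0
    have hklt : k0 < k := by omega
    have hup := hu k hklt ⟨x, hp⟩
    have hxne : x ≠ u k := by
      intro h; exact h2 (by rw [h]; exact hup.2)
    unfold flowPhi
    dsimp only
    simp only [if_neg h1]
    rcases sign_cases (u k - x) with ⟨hd, hs⟩ | ⟨hd, hs⟩ | ⟨hd, hs⟩ <;> rw [hs] <;> omega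

lemma flow_fix : flowF X k0 x0 u (x0, k0) = (x0, k0) := by
  unfold flowF
  dsimp only
  rw [if_pos (le_refl k0)]
  norm_num

include hk0 hx0 hu hrc hW in
lemma flow_iter : ∀ n : ℕ, ∀ p ∈ X, flowPhi k0 x0 u W p ≤ n →
    (flowF X k0 x0 u)^[n] p = (x0, k0) := by
  intro n
  induction n with
  | zero =>
    rintro ⟨x, k⟩ hp hphi
    have hk := hk0 _ hp
    unfold flowPhi at hphi
    dsimp only at hphi
    have h1 : (W + 1) * (k - k0).toNat = 0 := by omega
    have h2 : (k - k0).toNat = 0 := by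
      rcases Nat.mul_eq_zero.mp h1 with h | h
      · omega
      · exact h
    have hkk : k = k0 := by omega
    rw [if_pos (show k ≤ k0 by omega)] at hphi
    have hxx : x = x0 := by omega
    rw [Function.iterate_zero_apply, hxx, hkk]
  | succ n ih =>
    intro p hp hphi
    by_cases hb : p = (x0, k0)
    · subst hb
      exact Function.iterate_fixed flow_fix _
    · rw [Function.iterate_succ_apply]
      exact ih _ (flow_mem hk0 hx0 hu hrc p hp)
        (by have := flow_dec hk0 hx0 hu hW p hp hb; omega)

end Term

lemma aux1 (X : Set Pt) (hX : X.Finite) (hne : X.Nonempty) (hconn : Conn 1 X)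
    (hrc : RowConvex X) : AuxContr 1 X := by
  classical
  -- minimum height
  obtain ⟨k0, ⟨p0, hp0, hp0e⟩, hk0'⟩ := fin_min_ex _ (hX.image Prod.snd) (hne.image _)
  have hk0 : ∀ p ∈ X, k0 ≤ p.2 := fun p hp => hk0' _ ⟨p, hp, rfl⟩
  have hx0 : (p0.1, k0) ∈ X := by rw [← hp0e]; exact hp0
  set x0 := p0.1 with hx0e
  -- crossing lemma
  have cross : ∀ (k : ℤ) (n : ℕ) (c : ℕ → Pt), (∀ j ≤ n, c j ∈ X) →
      (∀ j < n, cAdj 1 (c j) (c (j + 1))) → k ≤ (c 0).2 → (c n).2 < k →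
      ∃ v, (v, k) ∈ X ∧ (v, k - 1) ∈ X := by
    intro k n
    induction n with
    | zero => intro c _ _ h1 h2; omega
    | succ n ih =>
      intro c hmem hadj h1 h2
      by_cases hc1 : k ≤ (c 1).2
      · exact ih (fun j => c (j + 1)) (fun j hj => hmem _ (by omega))
          (fun j hj => hadj _ (by omega)) hc1 h2
      · have ha : cAdj 1 (c 0) (c 1) := hadj 0 (by omega)
        rw [cAdj_one_iff] at ha
        have e1 : (c 0).2 = k := by omega
        have e2 : (c 1).2 = k - 1 := by omega
        have e3 : (c 1).1 = (c 0).1 := by omega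
        refine ⟨(c 0).1, ?_, ?_⟩
        · rw [← e1]; exact hmem 0 (by omega)
        · rw [← e2, ← e3]; exact hmem 1 (by omega)
  -- portals
  have huex : ∀ k : ℤ, ∃ v, k0 < k → (∃ x, (x, k) ∈ X) → (v, k) ∈ X ∧ (v, k - 1) ∈ X := by
    intro k
    by_cases h : k0 < k ∧ ∃ x, (x, k) ∈ X
    · obtain ⟨hk, x, hx⟩ := h
      obtain ⟨n, c, hc0, hcn, hmem, hadj⟩ := hconn (x, k) hx (x0, k0) hx0
      obtain ⟨v, hv⟩ := cross k n c hmem hadj (by rw [hc0]) (by rw [hcn]; exact hk)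
      exact ⟨v, fun _ _ => hv⟩
    · exact ⟨0, fun h1 h2 => absurd ⟨h1, h2⟩ h⟩
  choose u hu using huex
  -- width bound
  obtain ⟨Mx, _, hMx⟩ := fin_max_ex _ (hX.image Prod.fst) (hne.image _)
  obtain ⟨mx, _, hmx⟩ := fin_min_ex _ (hX.image Prod.fst) (hne.image _)
  set W := (Mx - mx).toNat with hWe
  have hW : ∀ p ∈ X, ∀ q ∈ X, (p.1 - q.1).natAbs ≤ W := by
    intro p hp q hq
    have h1 := hMx _ ⟨p, hp, rfl⟩
    have h2 := hmx _ ⟨p, hp, rfl⟩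
    have h3 := hMx _ ⟨q, hq, rfl⟩
    have h4 := hmx _ ⟨q, hq, rfl⟩
    omega
  -- uniform bound on the potential
  set N := hX.toFinset.sup (flowPhi k0 x0 u W) with hNe
  have hN : ∀ p ∈ X, flowPhi k0 x0 u W p ≤ N :=
    fun p hp => Finset.le_sup (hX.mem_toFinset.2 hp)
  -- iterated membership and continuity
  have itermem : ∀ (t : ℕ), ∀ p ∈ X, (flowF X k0 x0 u)^[t] p ∈ X := by
    intro t
    induction t with
    | zero => intro p hp; exact hp
    | succ t ih =>
      intro p hp
      rw [Function.iterate_succ_apply']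
      exact flow_mem hk0 hx0 hu hrc _ (ih p hp)
  have itercont : ∀ (t : ℕ), ∀ p ∈ X, ∀ q ∈ X, cAdj 1 p q →
      cAdj 1 ((flowF X k0 x0 u)^[t] p) ((flowF X k0 x0 u)^[t] q) := by
    intro t
    induction t with
    | zero => intro p _ q _ h; exact h
    | succ t ih =>
      intro p hp q hq h
      rw [Function.iterate_succ_apply', Function.iterate_succ_apply']
      exact flow_cont hk0 hx0 hu hrc _ (itermem t p hp) _ (itermem t q hq) (ih p hp q hq h)
  refine ⟨(x0, k0), hx0, N, fun p t => (flowF X k0 x0 u)^[t] p, fun p _ => rfl, ?_, ?_, ?_⟩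
  · intro p hp
    exact flow_iter hk0 hx0 hu hrc hW N p hp (hN p hp)
  · intro p hp t _
    exact itermem t p hp
  · intro p hp q hq s t hs ht hadj
    unfold prodAdj at hadj
    rw [if_pos rfl] at hadj
    dsimp only at hadj
    rcases hadj with ⟨hadj, hst⟩ | ⟨hpq, hnat⟩
    · subst hst
      exact itercont s p hp q hq hadj
    · subst hpq
      rcases hnat with h | h | h
    
      · subst h; exact cAdj_refl 1 _
      · dsimp only
        rw [← h, Function.iterate_succ_apply']
        exact flow_adj_self _
      · dsimp only
        rw [← h, Function.iterate_succ_apply']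
        exact cAdj_symm (flow_adj_self _)

lemma exists_nbr {i : ℕ} {X : Set Pt} (hconn : Conn i X) {p y : Pt}
    (hp : p ∈ X) (hy : y ∈ X) (hne : y ≠ p) : ∃ w ∈ X, w ≠ p ∧ cAdj i p w := by
  obtain ⟨n, c, hc0, hcn, hmem, hadj⟩ := hconn p hp y hy
  have key : ∀ (n : ℕ) (c : ℕ → Pt), c 0 = p → c n ≠ p → (∀ j ≤ n, c j ∈ X) →
      (∀ j < n, cAdj i (c j) (c (j + 1))) → ∃ w ∈ X, w ≠ p ∧ cAdj i p w := by
    intro n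
    induction n with
    | zero => intro c h0 hn _ _; exact absurd h0 hn
    | succ n ih =>
      intro c h0 hn hmem hadj
      by_cases h1 : c 1 = p
      · exact ih (fun j => c (j + 1)) h1 hn (fun j hj => hmem _ (by omega))
          (fun j hj => hadj _ (by omega))
      · have ha : cAdj i (c 0) (c 1) := hadj 0 (by omega)
        exact ⟨c 1, hmem 1 (by omega), h1, h0 ▸ ha⟩
  exact key n c hc0 (hcn ▸ hne) hmem hadj

lemma select2 (X : Set Pt) (hX : X.Finite) (hconn : Conn 2 X) (hrc : RowConvex X)
    (hnt : ∃ y ∈ X, ∃ z ∈ X, y ≠ z) :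
    ∃ p ∈ X, ∃ q ∈ X, q ≠ p ∧ ((p.1 - 1, p.2) ∉ X ∨ (p.1 + 1, p.2) ∉ X) ∧
      ∀ w ∈ X, cAdj 2 w p → cAdj 2 w q := by
  have hne : X.Nonempty := by obtain ⟨y, hy, _⟩ := hnt; exact ⟨y, hy⟩
  obtain ⟨k, ⟨pk, hpk, hpke⟩, hk'⟩ := fin_max_ex _ (hX.image Prod.snd) (hne.image _)
  have htop : ∀ w ∈ X, w.2 ≤ k := fun w hw => hk' _ ⟨w, hw, rfl⟩
  -- the top row, as a set of integers
  set R : Set ℤ := Prod.fst '' (X ∩ {p | p.2 = k}) with hR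
  have hRfin : R.Finite := ((hX.subset Set.inter_subset_left).image _)
  have hRne : R.Nonempty := ⟨pk.1, pk, ⟨hpk, hpke⟩, rfl⟩
  obtain ⟨b, hbR, hb'⟩ := fin_max_ex R hRfin hRne
  obtain ⟨a, haR, ha'⟩ := fin_min_ex R hRfin hRne
  have hbX : (b, k) ∈ X := by
    obtain ⟨w, ⟨hw1, hw2⟩, hw3⟩ := hbR
    rw [← hw3, ← hw2]; exact hw1
  have haX : (a, k) ∈ X := by
    obtain ⟨w, ⟨hw1, hw2⟩, hw3⟩ := haR
    rw [← hw3, ← hw2]; exact hw1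
  have hrow : ∀ x : ℤ, (x, k) ∈ X → a ≤ x ∧ x ≤ b :=
    fun x hx => ⟨ha' x ⟨(x, k), ⟨hx, rfl⟩, rfl⟩, hb' x ⟨(x, k), ⟨hx, rfl⟩, rfl⟩⟩
  have hab : a ≤ b := (hrow a haX).2
  by_cases hA : (b, k - 1) ∈ X
  · -- Case A : drop the right end onto the point below it
    refine ⟨(b, k), hbX, (b, k - 1), hA, ?_, ?_, ?_⟩
    · intro h; rw [Prod.ext_iff] at h; dsimp at h; omega
    · right; intro hc; have := (hrow _ hc).2; omega
    · rintro ⟨w1, w2⟩ hw hadj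
      rw [cAdj_two_iff] at hadj ⊢
      dsimp only at hadj ⊢
      have := htop _ hw
      dsimp at this
      constructor <;> omega
  · by_cases hC : (b + 1, k - 1) ∈ X
    · -- Case C : row k-1 lies entirely to the right of b ; use the left end
      have hright : ∀ c : ℤ, (c, k - 1) ∈ X → b + 1 ≤ c := by
        intro c hc
        by_contra hcon
        push_neg at hcon
        exact hA (hrc c b (b + 1) (k - 1) hc hC (by omega) (by omega))
      have ha1 : (a, k - 1) ∉ X := fun h => by have := hright a h; omega
      have ha2 : (a - 1, k - 1) ∉ X := fun h => by have := hright _ h; omega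
      by_cases habe : a < b
      · -- p = (a,k), q = (a+1,k)
        have hq : (a + 1, k) ∈ X := hrc a (a + 1) b k haX hbX (by omega) (by omega)
        refine ⟨(a, k), haX, (a + 1, k), hq, ?_, ?_, ?_⟩
        · intro h; rw [Prod.ext_iff] at h; dsimp at h; omega
        · left; intro hc; have := (hrow _ hc).1; omega
        · rintro ⟨w1, w2⟩ hw hadj
          rw [cAdj_two_iff] at hadj ⊢
          dsimp only at hadj ⊢
          have h2 := htop _ hw
          dsimp at h2
          by_cases hw2 : w2 = k
          · subst hw2
            have := hrow w1 hw
            constructor <;> omega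
          · have hw2' : w2 = k - 1 := by omega
            subst hw2'
            have := hright w1 hw
            constructor <;> omega
      · -- a = b : single-point top row, q = (a+1, k-1)
        have hae : a = b := by omega
        subst hae
        obtain ⟨y, hy, z, hz, hyz⟩ := hnt
        have hother : ∃ w ∈ X, w ≠ (a, k) := by
          by_cases h : y = (a, k)
          · exact ⟨z, hz, by rw [← h]; exact fun hh => hyz hh.symm⟩
          · exact ⟨y, hy, h⟩
        obtain ⟨w0, hw0X, hw0ne⟩ := hother
        obtain ⟨v, hvX, hvne, hvadj⟩ := exists_nbr hconn haX hw0X hw0ne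
        obtain ⟨v1, v2⟩ := v
        rw [cAdj_two_iff] at hvadj
        dsimp only at hvadj
        have hv2 := htop _ hvX
        dsimp at hv2
        have hv : v1 = a + 1 ∧ v2 = k - 1 := by
          by_cases hw2 : v2 = k
          · subst hw2
            have := hrow v1 hvX
            exact absurd (by rw [Prod.ext_iff]; constructor <;> dsimp <;> omega) hvne
          · have hw2' : v2 = k - 1 := by omega
            subst hw2'
            have hc1 : v1 = a - 1 ∨ v1 = a ∨ v1 = a + 1 := by omega
            rcases hc1 with h | h | h
            · subst h; exact absurd hvX ha2
            · subst h; exact absurd hvX ha1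
            · exact ⟨h, rfl⟩
        obtain ⟨hv1, hv2'⟩ := hv
        subst hv1; subst hv2'
        refine ⟨(a, k), haX, (a + 1, k - 1), hvX, ?_, ?_, ?_⟩
        · intro h; rw [Prod.ext_iff] at h; dsimp at h; omega
        · left; intro hc; have := (hrow _ hc).1; omega
        · rintro ⟨w1, w2⟩ hw hadj
          rw [cAdj_two_iff] at hadj ⊢
          dsimp only at hadj ⊢
          have h2 := htop _ hw
          dsimp at h2
          by_cases hw2 : w2 = k
          · subst hw2
            have := hrow w1 hw
            constructor <;> omega
          · have hw2' : w2 = k - 1 := by omega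
            subst hw2'
            have hc1 : w1 = a - 1 ∨ w1 = a ∨ w1 = a + 1 := by omega
            rcases hc1 with h | h | h
            · subst h; exact absurd hw ha2
            · subst h; exact absurd hw ha1
            · constructor <;> omega
    · -- Case B : (b,k-1) ∉ X and (b+1,k-1) ∉ X
      by_cases habe : a < b
      · -- p = (b,k), q = (b-1,k)
        have hq : (b - 1, k) ∈ X := hrc a (b - 1) b k haX hbX (by omega) (by omega)
        refine ⟨(b, k), hbX, (b - 1, k), hq, ?_, ?_, ?_⟩
        · intro h; rw [Prod.ext_iff] at h; dsimp at h; omega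
        · right; intro hc; have := (hrow _ hc).2; omega
        · rintro ⟨w1, w2⟩ hw hadj
          rw [cAdj_two_iff] at hadj ⊢
          dsimp only at hadj ⊢
          have h2 := htop _ hw
          dsimp at h2
          by_cases hw2 : w2 = k
          · subst hw2
            have := hrow w1 hw
            constructor <;> omega
          · have hw2' : w2 = k - 1 := by omega
            subst hw2'
            have hc1 : w1 = b - 1 ∨ w1 = b ∨ w1 = b + 1 := by omega
            rcases hc1 with h | h | h
            · subst h; constructor <;> omega
            · subst h; exact absurd hw hA
            · subst h; exact absurd hw hC
      · -- a = b : single-point top row, q = (b-1, k-1)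
        have hae : a = b := by omega
        subst hae
        obtain ⟨y, hy, z, hz, hyz⟩ := hnt
        have hother : ∃ w ∈ X, w ≠ (a, k) := by
          by_cases h : y = (a, k)
          · exact ⟨z, hz, by rw [← h]; exact fun hh => hyz hh.symm⟩
          · exact ⟨y, hy, h⟩
        obtain ⟨w0, hw0X, hw0ne⟩ := hother
        obtain ⟨v, hvX, hvne, hvadj⟩ := exists_nbr hconn haX hw0X hw0ne
        obtain ⟨v1, v2⟩ := v
        rw [cAdj_two_iff] at hvadj
        dsimp only at hvadj
        have hv2 := htop _ hvX
        dsimp at hv2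
        have hv : v1 = a - 1 ∧ v2 = k - 1 := by
          by_cases hw2 : v2 = k
          · subst hw2
            have := hrow v1 hvX
            exact absurd (by rw [Prod.ext_iff]; constructor <;> dsimp <;> omega) hvne
          · have hw2' : v2 = k - 1 := by omega
            subst hw2'
            have hc1 : v1 = a - 1 ∨ v1 = a ∨ v1 = a + 1 := by omega
            rcases hc1 with h | h | h
            · exact ⟨h, rfl⟩
            · subst h; exact absurd hvX hA
            · subst h; exact absurd hvX hC
        obtain ⟨hv1, hv2'⟩ := hv
        subst hv1; subst hv2'
        refine ⟨(a, k), haX, (a - 1, k - 1), hvX, ?_, ?_, ?_⟩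
        · intro h; rw [Prod.ext_iff] at h; dsimp at h; omega
        · left; intro hc; have := (hrow _ hc).1; omega
        · rintro ⟨w1, w2⟩ hw hadj
          rw [cAdj_two_iff] at hadj ⊢
          dsimp only at hadj ⊢
          have h2 := htop _ hw
          dsimp at h2
          by_cases hw2 : w2 = k
          · subst hw2
            have := hrow w1 hw
            constructor <;> omega
          · have hw2' : w2 = k - 1 := by omega
            subst hw2'
            have hc1 : w1 = a - 1 ∨ w1 = a ∨ w1 = a + 1 := by omega
            rcases hc1 with h | h | h
            · constructor <;> omega
            · subst h; exact absurd hw hA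
            · subst h; exact absurd hw hC

lemma conn_diff {X : Set Pt} {p q : Pt} (hconn : Conn 2 X) (hq : q ∈ X) (hqp : q ≠ p)
    (dom : ∀ w ∈ X, cAdj 2 w p → cAdj 2 w q) : Conn 2 (X \ {p}) := by
  classical
  intro x hx y hy
  obtain ⟨n, c, h0, hn, hmem, hadj⟩ := hconn x hx.1 y hy.1
  have hx2 : x ≠ p := hx.2
  have hy2 : y ≠ p := hy.2
  refine ⟨n, fun j => if c j = p then q else c j, ?_, ?_, ?_, ?_⟩
  · dsimp only; rw [h0, if_neg hx2]
  · dsimp only; rw [hn, if_neg hy2]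
  · intro j hj
    dsimp only
    by_cases h : c j = p
    · rw [if_pos h]; exact ⟨hq, hqp⟩
    · rw [if_neg h]; exact ⟨hmem j hj, h⟩
  · intro j hj
    dsimp only
    have ha := hadj j hj
    by_cases h1 : c j = p <;> by_cases h2 : c (j + 1) = p
    · rw [if_pos h1, if_pos h2]; exact cAdj_refl 2 q
    · rw [if_pos h1, if_neg h2]
      exact cAdj_symm (dom _ (hmem (j + 1) (by omega)) (cAdj_symm (h1 ▸ ha)))
    · rw [if_neg h1, if_pos h2]
      exact dom _ (hmem j (by omega)) (h2 ▸ ha)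
    · rw [if_neg h1, if_neg h2]; exact ha

lemma rc_diff {X : Set Pt} {p : Pt} (hrc : RowConvex X)
    (hend : (p.1 - 1, p.2) ∉ X ∨ (p.1 + 1, p.2) ∉ X) : RowConvex (X \ {p}) := by
  intro a e c kk ha hc hae hec
  have hmem : (e, kk) ∈ X := hrc a e c kk ha.1 hc.1 hae hec
  refine ⟨hmem, ?_⟩
  intro hep
  have hep' : (e, kk) = p := hep
  have hane : (a, kk) ≠ p := ha.2
  have hcne : (c, kk) ≠ p := hc.2
  have hal : a < e := by
    rcases lt_or_eq_of_le hae with h | h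
    · exact h
    · exact absurd (h ▸ hep') hane
  have hcl : e < c := by
    rcases lt_or_eq_of_le hec with h | h
    · exact h
    · exact absurd (h ▸ hep') hcne
  have h1 : (e - 1, kk) ∈ X := hrc a (e - 1) c kk ha.1 hc.1 (by omega) (by omega)
  have h2 : (e + 1, kk) ∈ X := hrc a (e + 1) c kk ha.1 hc.1 (by omega) (by omega)
  rcases hend with h | h
  · exact h (by rw [← hep']; exact h1)
  · exact h (by rw [← hep']; exact h2)

lemma aux2 : ∀ (n : ℕ) (X : Set Pt), X.Finite → X.ncard ≤ n → X.Nonempty → Conn 2 X →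
    RowConvex X → AuxContr 2 X := by
  intro n
  induction n with
  | zero =>
    intro X hX hcard hne _ _
    have := (Set.ncard_pos hX).2 hne
    omega
  | succ n ih =>
    intro X hX hcard hne hconn hrc
    classical
    by_cases hsing : ∀ y ∈ X, ∀ z ∈ X, y = z
    · obtain ⟨x₀, hx₀⟩ := hne
      refine ⟨x₀, hx₀, 0, fun p _ => p, fun p _ => rfl, fun p hp => hsing p hp x₀ hx₀,
        fun p hp t _ => hp, ?_⟩
      intro p hp q hq s t _ _ _
      rw [hsing p hp q hq]
      exact cAdj_refl 2 q
    · push_neg at hsing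
      obtain ⟨y, hy, z, hz, hyz⟩ := hsing
      obtain ⟨p, hpX, q, hqX, hqp, hend, dom⟩ := select2 X hX hconn hrc ⟨y, hy, z, hz, hyz⟩
      have hq' : q ∈ X \ {p} := ⟨hqX, hqp⟩
      have hX' : (X \ {p}).Finite := hX.subset Set.diff_subset
      have hcard' : (X \ {p}).ncard ≤ n := by
        rw [Set.ncard_diff_singleton_of_mem hpX]
        have := (Set.ncard_pos hX).2 ⟨p, hpX⟩
        omega
      obtain ⟨x₀, hx₀, m, H, h0, hm, hmem, hadj⟩ :=
        ih (X \ {p}) hX' hcard' ⟨q, hq'⟩ (conn_diff hconn hqX hqp dom) (rc_diff hrc hend)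
      have hF : ∀ z ∈ X, (if z = p then q else z) ∈ X \ {p} := by
        intro z hz
        by_cases h : z = p
        · rw [if_pos h]; exact hq'
        · rw [if_neg h]; exact ⟨hz, h⟩
      refine ⟨x₀, hx₀.1, m + 1,
        fun z t => if t = 0 then z else H (if z = p then q else z) (t - 1), ?_, ?_, ?_, ?_⟩
      · intro z _; dsimp only; rw [if_pos rfl]
      · intro z hz
        dsimp only
        rw [if_neg (by omega)]
        exact hm _ (hF z hz)
      · intro z hz t ht
        dsimp only
        by_cases h : t = 0
        · rw [if_pos h]; exact hz
        · rw [if_neg h]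
          exact (hmem _ (hF z hz) (t - 1) (by omega)).1
      · intro z hz w hw s t hs ht hadj2
        dsimp only
        unfold prodAdj at hadj2
        rw [if_neg (by norm_num)] at hadj2
        dsimp only at hadj2
        obtain ⟨hzw, hnat⟩ := hadj2
        have hFadj : cAdj 2 (if z = p then q else z) (if w = p then q else w) := by
          by_cases h1 : z = p <;> by_cases h2 : w = p
          · rw [if_pos h1, if_pos h2]; exact cAdj_refl 2 q
          · rw [if_pos h1, if_neg h2]
            exact cAdj_symm (dom w hw (cAdj_symm (h1 ▸ hzw)))
          · rw [if_neg h1, if_pos h2]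
            exact dom z hz (h2 ▸ hzw)
          · rw [if_neg h1, if_neg h2]; exact hzw
        by_cases hs0 : s = 0 <;> by_cases ht0 : t = 0
        · rw [if_pos hs0, if_pos ht0]; exact hzw
        · -- s = 0, t = 1
          have ht1 : t = 1 := by unfold natAdj at hnat; omega
          rw [if_pos hs0, if_neg ht0, ht1]
          rw [h0 _ (hF w hw)]
          by_cases h2 : w = p
          · rw [if_pos h2]
            exact dom z hz (h2 ▸ hzw)
          · rw [if_neg h2]; exact hzw
        · -- t = 0, s = 1
          have hs1 : s = 1 := by unfold natAdj at hnat; omega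
          rw [if_neg hs0, if_pos ht0, hs1]
          rw [h0 _ (hF z hz)]
          by_cases h1 : z = p
          · rw [if_pos h1]
            exact cAdj_symm (dom w hw (cAdj_symm (h1 ▸ hzw)))
          · rw [if_neg h1]; exact hzw
        · rw [if_neg hs0, if_neg ht0]
          refine hadj _ (hF z hz) _ (hF w hw) (s - 1) (t - 1) (by omega) (by omega) ?_
          unfold prodAdj
          rw [if_neg (by norm_num)]
          refine ⟨hFadj, ?_⟩
          unfold natAdj at hnat ⊢
          omega

lemma aux_to_contr (i : ℕ) (X : Set Pt) (h : AuxContr i X) : Contractible i (subAdj i X) := by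
  obtain ⟨x₀, hx₀, m, H, h0, hm, hmem, hadj⟩ := h
  refine ⟨⟨x₀, hx₀⟩, m, fun x t => ⟨H x.1 (min t m), hmem x.1 x.2 _ (min_le_right _ _)⟩, ?_, ?_, ?_⟩
  · intro x
    exact Subtype.ext (by simpa using h0 x.1 x.2)
  · intro x
    exact Subtype.ext (by simp [min_self, hm x.1 x.2])
  · intro x y s t hs ht hadj'
    have hP : prodAdj i (cAdj i) (x.1, s) (y.1, t) := by
      unfold prodAdj at hadj' ⊢
      split_ifs at hadj' ⊢ with hi
      · rcases hadj' with ⟨h1, h2⟩ | ⟨h1, h2⟩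
        · exact Or.inl ⟨h1, h2⟩
        · exact Or.inr ⟨congrArg Subtype.val h1, h2⟩
      · exact ⟨hadj'.1, hadj'.2⟩
    have := hadj x.1 x.2 y.1 y.2 s t hs ht hP
    show cAdj i (H x.1 (min s m)) (H y.1 (min t m))
    rwa [min_eq_left hs, min_eq_left ht]


/-- a finite, nonempty, `c_i`-connected, row-convex set is
`i`-contractible. -/
theorem stmt11 (i : ℕ) (hi : i = 1 ∨ i = 2) (X : Set Pt)
    (hX : X.Finite) (hne : X.Nonempty) (hconn : Conn i X) (hrc : RowConvex X) :
    Contractible i (subAdj i X) := by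
  apply aux_to_contr
  rcases hi with h | h <;> subst h
  · exact aux1 X hX hne hconn hrc
  · exact aux2 X.ncard X hX le_rfl hne hconn hrc
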